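/- For any X, Y ∈ ℝ^{nd×d} with d×d blocks X_1,…,X_n and Y_1,…,Y_n satisfying min_{1≤i≤n}(σ_min(X_i) + σ_min(Y_i)) > 0, one has d_F(P_n(X), P_n(Y)) ≤ 2·d_F(X,Y) / min_{1≤i≤n}(σ_min(X_i) + σ_min(Y_i)). -/

import Mathlib

open MeasureTheory Matrix Filter

namespace GOPP

/-- Frobenius norm of a real matrix. -/
noncomputable def frob {α β : Type*} [Fintype α] [Fintype β] (X : Matrix α β ℝ) : ℝ :=
  Real.sqrt (∑ i, ∑ j, X i j ^ 2)

/-- Euclidean norm of a vector. -/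
noncomputable def vnorm {β : Type*} [Fintype β] (v : β → ℝ) : ℝ :=
  Real.sqrt (∑ j, v j ^ 2)

/-- Operator (spectral) norm: the supremum of ‖Xu‖ over unit vectors u. -/
noncomputable def opNorm {α β : Type*} [Fintype α] [Fintype β] (X : Matrix α β ℝ) : ℝ :=
  sSup {r : ℝ | ∃ u : β → ℝ, vnorm u = 1 ∧ r = vnorm (X.mulVec u)}

/-- Smallest singular value: the infimum of ‖uᵀX‖ over unit vectors u (for a d×m matrix
with d ≤ m this is the d-th largest singular value; for square matrices it is σ_min). -/
noncomputable def sigmaMin {α β : Type*} [Fintype α] [Fintype β] (X : Matrix α β ℝ) : ℝ :=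
  sInf {r : ℝ | ∃ u : α → ℝ, vnorm u = 1 ∧ r = vnorm (Matrix.vecMul u X)}

/-- Condition number κ = σ_max/σ_min. -/
noncomputable def kappa {d m : ℕ} (A : Matrix (Fin d) (Fin m) ℝ) : ℝ :=
  opNorm A / sigmaMin A

/-- Q is an orthogonal matrix. -/
def IsOrth {d : ℕ} (Q : Matrix (Fin d) (Fin d) ℝ) : Prop :=
  Qᵀ * Q = 1 ∧ Q * Qᵀ = 1

/-- Nuclear norm, via the dual characterization ‖M‖_* = max_{Q ∈ O(d)} ⟨Q, M⟩. -/
noncomputable def nuclearNorm {d : ℕ} (M : Matrix (Fin d) (Fin d) ℝ) : ℝ :=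
  sSup {r : ℝ | ∃ Q : Matrix (Fin d) (Fin d) ℝ, IsOrth Q ∧ r = Matrix.trace (Qᵀ * M)}

/-- The i-th d×k block of an (nd)×k block matrix. -/
def blk {n d k : ℕ} (S : Matrix (Fin n × Fin d) (Fin k) ℝ) (i : Fin n) :
    Matrix (Fin d) (Fin k) ℝ :=
  Matrix.of fun a b => S (i, a) b

/-- The i-th diagonal d×d block of an (nd)×(nd) matrix. -/
def dblk {n d : ℕ} (G : Matrix (Fin n × Fin d) (Fin n × Fin d) ℝ) (i : Fin n) :
    Matrix (Fin d) (Fin d) ℝ :=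
  Matrix.of fun a b => G (i, a) (i, b)

/-- S ∈ O(d)^{⊗n}: each of the n d×d blocks of S is orthogonal. -/
def OrthBlocks {n d : ℕ} (S : Matrix (Fin n × Fin d) (Fin d) ℝ) : Prop :=
  ∀ i, IsOrth (blk S i)

/-- Z ∈ ℝ^{nd×d}: the vertical stack of n copies of I_d. -/
def ZStack (n d : ℕ) : Matrix (Fin n × Fin d) (Fin d) ℝ :=
  Matrix.of fun p j => if p.2 = j then 1 else 0

/-- Vertical stack of n given d×k matrices. -/
def stack {n d k : ℕ} (B : Fin n → Matrix (Fin d) (Fin k) ℝ) :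
    Matrix (Fin n × Fin d) (Fin k) ℝ :=
  Matrix.of fun p b => B p.1 p.2 b

/-- d_F(X,Y) = min_{Q ∈ O(d)} ‖X − YQ‖_F. -/
noncomputable def dF {n d : ℕ} (X Y : Matrix (Fin n × Fin d) (Fin d) ℝ) : ℝ :=
  sInf {r : ℝ | ∃ Q, IsOrth Q ∧ r = frob (X - Y * Q)}

/-- R is a polar factor P(X) of X: an orthogonal global minimizer of ‖X − Q‖_F over O(d). -/
def IsPolar {d : ℕ} (X R : Matrix (Fin d) (Fin d) ℝ) : Prop :=
  IsOrth R ∧ ∀ Q : Matrix (Fin d) (Fin d) ℝ, IsOrth Q → frob (X - R) ≤ frob (X - Q)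

/-- S = P_n(X): blockwise polar factor. -/
def IsPolarBlocks {n d : ℕ} (X S : Matrix (Fin n × Fin d) (Fin d) ℝ) : Prop :=
  ∀ i, IsPolar (blk X i) (blk S i)

/-- U collects (an orthonormal basis of the span of) the top d left singular vectors of D:
U has orthonormal columns and maximizes the Ky Fan quantity trace(Uᵀ(DDᵀ)U). -/
def IsTopSingVecs {N : Type*} [Fintype N] {d m : ℕ} (D : Matrix N (Fin m) ℝ)
    (U : Matrix N (Fin d) ℝ) : Prop :=
  Uᵀ * U = 1 ∧ ∀ Q : Matrix N (Fin d) ℝ, Qᵀ * Q = 1 →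
    Matrix.trace (Qᵀ * (D * Dᵀ) * Q) ≤ Matrix.trace (Uᵀ * (D * Dᵀ) * U)

/-- (U, S, V) is a top-d singular triple of D: orthonormal U, V, diagonal nonnegative S,
DV = US, DᵀU = VS, and U spans a top-d left singular subspace. -/
def IsSVDTriple {N : Type*} [Fintype N] {d m : ℕ} (D : Matrix N (Fin m) ℝ)
    (U : Matrix N (Fin d) ℝ) (S : Matrix (Fin d) (Fin d) ℝ)
    (V : Matrix (Fin m) (Fin d) ℝ) : Prop :=
  Vᵀ * V = 1 ∧ (∀ a b, a ≠ b → S a b = 0) ∧ (∀ a, 0 ≤ S a a) ∧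
    D * V = U * S ∧ Dᵀ * U = V * S ∧ IsTopSingVecs D U

/-- The generalized power method sequence with spectral initialization, run on the data
matrix D (so with C = DDᵀ): S⁰ = P_n(U) for top singular vectors U of D, and
S^{t+1} = P_n(C Sᵗ). -/
def IsGPM {n d m : ℕ} (D : Matrix (Fin n × Fin d) (Fin m) ℝ)
    (S : ℕ → Matrix (Fin n × Fin d) (Fin d) ℝ) : Prop :=
  (∃ U, IsTopSingVecs D U ∧ IsPolarBlocks U (S 0)) ∧
    ∀ t, IsPolarBlocks (D * Dᵀ * S t) (S (t + 1))

/-- W^(i): W with its i-th block row replaced by 0. -/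
def mask {n d m : ℕ} (W : Matrix (Fin n × Fin d) (Fin m) ℝ) (i : Fin n) :
    Matrix (Fin n × Fin d) (Fin m) ℝ :=
  Matrix.of fun p b => if p.1 = i then 0 else W p b

/-- The noise matrix Δ = WAᵀZᵀ + ZAWᵀ + σWWᵀ. -/
noncomputable def delta {n d m : ℕ} (A : Matrix (Fin d) (Fin m) ℝ)
    (W : Matrix (Fin n × Fin d) (Fin m) ℝ) (σ : ℝ) :
    Matrix (Fin n × Fin d) (Fin n × Fin d) ℝ :=
  W * Aᵀ * (ZStack n d)ᵀ + ZStack n d * A * Wᵀ + σ • (W * Wᵀ)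

/-- The i-th block column Δ_i = WAᵀ + ZAW_iᵀ + σWW_iᵀ of Δ. -/
noncomputable def deltaCol {n d m : ℕ} (A : Matrix (Fin d) (Fin m) ℝ)
    (W : Matrix (Fin n × Fin d) (Fin m) ℝ) (σ : ℝ) (i : Fin n) :
    Matrix (Fin n × Fin d) (Fin d) ℝ :=
  W * Aᵀ + ZStack n d * A * (blk W i)ᵀ + σ • (W * (blk W i)ᵀ)

/-- The operator L S = C S/(n‖A‖²) with C = ZAAᵀZᵀ + σΔ. -/
noncomputable def Lop {n d m : ℕ} (A : Matrix (Fin d) (Fin m) ℝ)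
    (W : Matrix (Fin n × Fin d) (Fin m) ℝ) (σ : ℝ)
    (S : Matrix (Fin n × Fin d) (Fin d) ℝ) : Matrix (Fin n × Fin d) (Fin d) ℝ :=
  ((n : ℝ) * opNorm A ^ 2)⁻¹ •
    ((ZStack n d * A * Aᵀ * (ZStack n d)ᵀ + σ • delta A W σ) * S)

/-- √(nd) + √m + √(2γ n log n). -/
noncomputable def bnd1 (n d m : ℕ) (γ : ℝ) : ℝ :=
  Real.sqrt ((n : ℝ) * d) + Real.sqrt (m : ℝ) + Real.sqrt (2 * γ * n * Real.log n)

/-- √(nd) + √m + √(2γ log n). -/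
noncomputable def bnd2 (n d m : ℕ) (γ : ℝ) : ℝ :=
  Real.sqrt ((n : ℝ) * d) + Real.sqrt (m : ℝ) + Real.sqrt (2 * γ * Real.log n)

/-- The basin of attraction N_ε. -/
def memNeps {n d : ℕ} (ε : ℝ) (S : Matrix (Fin n × Fin d) (Fin d) ℝ) : Prop :=
  OrthBlocks S ∧ dF S (ZStack n d) ≤ ε * Real.sqrt ((n : ℝ) * d)

/-- The basin of attraction N_{ξ,∞}. -/
def memNxi {n d m : ℕ} (W : Matrix (Fin n × Fin d) (Fin m) ℝ) (γ ξ : ℝ)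
    (S : Matrix (Fin n × Fin d) (Fin d) ℝ) : Prop :=
  OrthBlocks S ∧ ∀ i, frob (blk W i * Wᵀ * S) ≤ ξ * Real.sqrt (d : ℝ) * bnd1 n d m γ ^ 2

/-- The distribution of a matrix with i.i.d. standard Gaussian N(0,1) entries. -/
noncomputable def stdGaussian (ι κ : Type*) [Fintype ι] [Fintype κ] :
    Measure (ι → κ → ℝ) :=
  Measure.pi fun _ : ι => Measure.pi fun _ : κ => ProbabilityTheory.gaussianReal 0 1

section AuxLemmas

variable {α β γ : Type*} [Fintype α] [Fintype β] [Fintype γ]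

lemma frob_nonneg (X : Matrix α β ℝ) : 0 ≤ frob X := Real.sqrt_nonneg _

lemma sum_sq_eq_trace (X : Matrix α β ℝ) : ∑ i, ∑ j, X i j ^ 2 = Matrix.trace (X * Xᵀ) := by
  simp [Matrix.trace, Matrix.mul_apply, Matrix.diag, sq]

lemma frob_eq_trace (X : Matrix α β ℝ) : frob X = Real.sqrt (Matrix.trace (X * Xᵀ)) := by
  rw [frob, sum_sq_eq_trace]

lemma frob_sq (X : Matrix α β ℝ) : frob X ^ 2 = Matrix.trace (X * Xᵀ) := by
  rw [frob_eq_trace, Real.sq_sqrt]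
  rw [← sum_sq_eq_trace]
  positivity

lemma frob_transpose (X : Matrix α β ℝ) : frob Xᵀ = frob X := by
  rw [frob_eq_trace, frob_eq_trace, transpose_transpose, Matrix.trace_mul_comm]

lemma frob_neg (X : Matrix α β ℝ) : frob (-X) = frob X := by
  simp [frob]

lemma frob_eq_norm (X : Matrix α β ℝ) :
    frob X = ‖(WithLp.equiv 2 (α × β → ℝ)).symm (fun p => X p.1 p.2)‖ := by
  rw [EuclideanSpace.norm_eq, frob]
  congr 1
  rw [Fintype.sum_prod_type]
  simp [sq_abs]

lemma frob_add_le (X Y : Matrix α β ℝ) : frob (X + Y) ≤ frob X + frob Y := by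
  simp only [frob_eq_norm]
  have := norm_add_le ((WithLp.equiv 2 (α × β → ℝ)).symm (fun p => X p.1 p.2))
    ((WithLp.equiv 2 (α × β → ℝ)).symm (fun p => Y p.1 p.2))
  have e : ((WithLp.equiv 2 (α × β → ℝ)).symm fun p => (X + Y) p.1 p.2) = ((WithLp.equiv 2 (α × β → ℝ)).symm fun p => X p.1 p.2) + (WithLp.equiv 2 (α × β → ℝ)).symm fun p => Y p.1 p.2 := rfl
  rw [e]; exact this

lemma frob_sub_le (X Y : Matrix α β ℝ) : frob (X - Y) ≤ frob X + frob Y := by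
  rw [sub_eq_add_neg]
  simpa [frob_neg] using frob_add_le X (-Y)


lemma isOrth_one {d : ℕ} : IsOrth (1 : Matrix (Fin d) (Fin d) ℝ) := by
  constructor <;> simp

lemma IsOrth.transpose {d : ℕ} {Q : Matrix (Fin d) (Fin d) ℝ} (h : IsOrth Q) : IsOrth Qᵀ := by
  refine ⟨?_, ?_⟩ <;> simp [h.1, h.2]

lemma IsOrth.mul {d : ℕ} {Q R : Matrix (Fin d) (Fin d) ℝ} (hQ : IsOrth Q) (hR : IsOrth R) :
    IsOrth (Q * R) := by
  constructor
  · rw [Matrix.transpose_mul]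
    calc Rᵀ * Qᵀ * (Q * R) = Rᵀ * (Qᵀ * Q) * R := by simp only [Matrix.mul_assoc]
    _ = 1 := by rw [hQ.1]; simp [hR.1]
  · rw [Matrix.transpose_mul]
    calc Q * R * (Rᵀ * Qᵀ) = Q * (R * Rᵀ) * Qᵀ := by simp only [Matrix.mul_assoc]
    _ = 1 := by rw [hR.2]; simp [hQ.2]

lemma frob_mul_orth_right {d : ℕ} (A : Matrix α (Fin d) ℝ) {Q : Matrix (Fin d) (Fin d) ℝ}
    (hQ : IsOrth Q) : frob (A * Q) = frob A := by
  rw [frob_eq_trace, frob_eq_trace, Matrix.transpose_mul]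
  congr 2
  calc A * Q * (Qᵀ * Aᵀ) = A * (Q * Qᵀ) * Aᵀ := by simp only [Matrix.mul_assoc]
  _ = A * Aᵀ := by rw [hQ.2]; simp

lemma frob_orth_mul_left {d : ℕ} (A : Matrix (Fin d) β ℝ) {Q : Matrix (Fin d) (Fin d) ℝ}
    (hQ : IsOrth Q) : frob (Q * A) = frob A := by
  rw [frob_eq_trace, frob_eq_trace, Matrix.transpose_mul, Matrix.trace_mul_comm]
  rw [Matrix.trace_mul_comm A Aᵀ]
  congr 2
  calc Aᵀ * Qᵀ * (Q * A) = Aᵀ * (Qᵀ * Q) * A := by simp only [Matrix.mul_assoc]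
  _ = Aᵀ * A := by rw [hQ.1]; simp

lemma vnorm_nonneg (v : β → ℝ) : 0 ≤ vnorm v := Real.sqrt_nonneg _

lemma vnorm_sq (v : β → ℝ) : vnorm v ^ 2 = ∑ j, v j ^ 2 := by
  rw [vnorm, Real.sq_sqrt]; positivity

lemma vnorm_vecMul_orth {d : ℕ} (v : Fin d → ℝ) {Q : Matrix (Fin d) (Fin d) ℝ}
    (hQ : IsOrth Q) : vnorm (Matrix.vecMul v Q) = vnorm v := by
  unfold vnorm
  congr 1
  have : ∀ w : Fin d → ℝ, ∑ j, w j ^ 2 = dotProduct w w := by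
    intro w; simp [dotProduct, sq]
  rw [this, this]
  calc (v ᵥ* Q) ⬝ᵥ (v ᵥ* Q) = (v ᵥ* Q) ⬝ᵥ (Qᵀ *ᵥ v) := by rw [Matrix.mulVec_transpose]
  _ = ((v ᵥ* Q) ᵥ* Qᵀ) ⬝ᵥ v := by rw [Matrix.dotProduct_mulVec]
  _ = (v ᵥ* (Q * Qᵀ)) ⬝ᵥ v := by rw [Matrix.vecMul_vecMul]
  _ = v ⬝ᵥ v := by rw [hQ.2, Matrix.vecMul_one]

lemma sigmaMin_mul_orth {d k : ℕ} (X : Matrix (Fin k) (Fin d) ℝ)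
    {Q : Matrix (Fin d) (Fin d) ℝ} (hQ : IsOrth Q) : sigmaMin (X * Q) = sigmaMin X := by
  unfold sigmaMin
  congr 1
  ext r
  simp only [Set.mem_setOf_eq]
  constructor
  · rintro ⟨u, hu, rfl⟩
    exact ⟨u, hu, by rw [← Matrix.vecMul_vecMul, vnorm_vecMul_orth _ hQ]⟩
  · rintro ⟨u, hu, rfl⟩
    exact ⟨u, hu, by rw [← Matrix.vecMul_vecMul, vnorm_vecMul_orth _ hQ]⟩

lemma sigmaMin_nonneg (X : Matrix α β ℝ) : 0 ≤ sigmaMin X := by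
  apply Real.sInf_nonneg
  rintro r ⟨u, hu, rfl⟩
  exact vnorm_nonneg _

lemma sigmaMin_bddBelow (X : Matrix α β ℝ) :
    BddBelow {r : ℝ | ∃ u : α → ℝ, vnorm u = 1 ∧ r = vnorm (Matrix.vecMul u X)} := by
  refine ⟨0, ?_⟩
  rintro r ⟨u, hu, rfl⟩
  exact vnorm_nonneg _

lemma transpose_stdBasisMatrix' {d : ℕ} (i j : Fin d) (c : ℝ) :
    (Matrix.single i j c)ᵀ = Matrix.single j i c := by
  ext a b
  simp [Matrix.single, Matrix.transpose_apply, and_comm]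

lemma trace_stdBasisMatrix_mul {d : ℕ} (a b : Fin d) (M : Matrix (Fin d) (Fin d) ℝ) :
    Matrix.trace (Matrix.single a b (1:ℝ) * M) = M b a := by
  rw [Matrix.trace]
  rw [Finset.sum_eq_single a]
  · simp
  · intro k _ hk
    simp [Matrix.diag, hk]
  · simp

/-- Givens-type rotation. -/
noncomputable def givens {d : ℕ} (i j : Fin d) (c s : ℝ) : Matrix (Fin d) (Fin d) ℝ :=
  1 + (c - 1) • (Matrix.single i i (1:ℝ) + Matrix.single j j (1:ℝ))
    + s • (Matrix.single j i (1:ℝ) - Matrix.single i j (1:ℝ))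

lemma givens_isOrth {d : ℕ} {i j : Fin d} (hij : i ≠ j) {c s : ℝ} (h : c ^ 2 + s ^ 2 = 1) :
    IsOrth (givens i j c s) := by
  set P := Matrix.single i i (1:ℝ) + Matrix.single j j (1:ℝ) with hPdef
  set S := Matrix.single j i (1:ℝ) - Matrix.single i j (1:ℝ) with hSdef
  have hPP : P * P = P := by
    simp only [hPdef, add_mul, mul_add, Matrix.single_mul_single_same,
      Matrix.single_mul_single_of_ne, hij, hij.symm, ne_eq, not_false_eq_true,
      mul_one]
    abel
  have hSS : S * S = -P := by
    simp only [hSdef, hPdef, sub_mul, mul_sub, Matrix.single_mul_single_same,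
      Matrix.single_mul_single_of_ne, hij, hij.symm, ne_eq, not_false_eq_true,
      mul_one]
    abel
  have hPS : P * S = S := by
    simp only [hPdef, hSdef, add_mul, mul_sub, Matrix.single_mul_single_same,
      Matrix.single_mul_single_of_ne, hij, hij.symm, ne_eq, not_false_eq_true,
      mul_one]
    abel
  have hSP : S * P = S := by
    simp only [hPdef, hSdef, sub_mul, mul_add, Matrix.single_mul_single_same,
      Matrix.single_mul_single_of_ne, hij, hij.symm, ne_eq, not_false_eq_true,
      mul_one]
    abel
  have hPT : Pᵀ = P := by
    simp only [hPdef, Matrix.transpose_add, transpose_stdBasisMatrix']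
  have hST : Sᵀ = -S := by
    simp only [hSdef, Matrix.transpose_sub, transpose_stdBasisMatrix']
    abel
  have hG : givens i j c s = 1 + (c - 1) • P + s • S := rfl
  have hGT : (givens i j c s)ᵀ = 1 + (c - 1) • P + (-s) • S := by
    rw [hG, Matrix.transpose_add, Matrix.transpose_add, Matrix.transpose_one,
      Matrix.transpose_smul, Matrix.transpose_smul, hPT, hST, smul_neg, ← neg_smul]
  have key : ∀ (s' : ℝ), s' ^ 2 = s ^ 2 →
      (1 + (c - 1) • P + s' • S) * (1 + (c - 1) • P + (-s') • S) = 1 := by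
    intro s' hs'
    have expand : (1 + (c - 1) • P + s' • S) * (1 + (c - 1) • P + (-s') • S)
        = 1 + ((c-1) + (c-1) + (c-1)*(c-1) + s'*s') • P
          + ((-s') + s' + (c-1)*(-s') + s'*(c-1)) • S := by
      simp only [add_mul, mul_add, one_mul, mul_one, Matrix.smul_mul, Matrix.mul_smul,
        hPP, hSS, hPS, hSP, smul_smul, smul_neg]
      module
    rw [expand]
    have h1 : ((c-1) + (c-1) + (c-1)*(c-1) + s'*s') = c^2 + s'^2 - 1 := by ring
    have h2 : ((-s') + s' + (c-1)*(-s') + s'*(c-1)) = 0 := by ring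
    have h3 : c^2 + s'^2 - 1 = 0 := by rw [hs', h]; ring
    rw [h1, h2, h3]
    simp
  constructor
  · rw [hGT, hG]
    have := key (-s) (by ring)
    simpa using this
  · rw [hGT, hG]
    exact key s rfl
lemma trace_givens_mul {d : ℕ} (i j : Fin d) (c s : ℝ) (M : Matrix (Fin d) (Fin d) ℝ) :
    Matrix.trace ((givens i j c s)ᵀ * M)
      = Matrix.trace M + (c - 1) * (M i i + M j j) - s * (M i j - M j i) := by
  have hGT : (givens i j c s)ᵀ = 1 + (c - 1) • (Matrix.single i i (1:ℝ)
      + Matrix.single j j (1:ℝ))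
      + (-s) • (Matrix.single j i (1:ℝ) - Matrix.single i j (1:ℝ)) := by
    unfold givens
    rw [Matrix.transpose_add, Matrix.transpose_add, Matrix.transpose_one,
      Matrix.transpose_smul, Matrix.transpose_smul, Matrix.transpose_add,
      Matrix.transpose_sub]
    simp only [transpose_stdBasisMatrix']
    rw [show (Matrix.single i j (1:ℝ) - Matrix.single j i (1:ℝ))
        = -(Matrix.single j i (1:ℝ) - Matrix.single i j (1:ℝ)) by abel,
      smul_neg, ← neg_smul]
  rw [hGT]
  simp only [add_mul, sub_mul, one_mul, Matrix.smul_mul, Matrix.trace_add, Matrix.trace_smul,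
    Matrix.trace_sub, trace_stdBasisMatrix_mul, smul_eq_mul]
  ring

lemma trace_expand {d : ℕ} (X Q : Matrix (Fin d) (Fin d) ℝ) (hQ : IsOrth Q) :
    Matrix.trace ((X - Q) * (X - Q)ᵀ)
      = Matrix.trace (X * Xᵀ) - 2 * Matrix.trace (Qᵀ * X) + d := by
  have h1 : Matrix.trace (X * Qᵀ) = Matrix.trace (Qᵀ * X) := Matrix.trace_mul_comm X Qᵀ
  have h2 : Matrix.trace (Q * Xᵀ) = Matrix.trace (Qᵀ * X) := by
    rw [← Matrix.trace_transpose (Q * Xᵀ), Matrix.transpose_mul, Matrix.transpose_transpose,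
      Matrix.trace_mul_comm]
  have h3 : Matrix.trace (Q * Qᵀ) = (d : ℝ) := by rw [hQ.2]; simp [Matrix.trace_one]
  rw [Matrix.transpose_sub, Matrix.mul_sub, Matrix.sub_mul, Matrix.sub_mul,
    Matrix.trace_sub, Matrix.trace_sub, Matrix.trace_sub, h1, h2, h3]
  ring

lemma IsPolar.trace_le {d : ℕ} {X R : Matrix (Fin d) (Fin d) ℝ} (hR : IsPolar X R)
    {Q : Matrix (Fin d) (Fin d) ℝ} (hQ : IsOrth Q) :
    Matrix.trace (Qᵀ * X) ≤ Matrix.trace (Rᵀ * X) := by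
  have hf := hR.2 Q hQ
  have hsq : frob (X - R) ^ 2 ≤ frob (X - Q) ^ 2 := by
    exact pow_le_pow_left₀ (frob_nonneg _) hf 2
  rw [frob_sq, frob_sq, trace_expand X R hR.1, trace_expand X Q hQ] at hsq
  linarith

lemma IsPolar.symm {d : ℕ} {X R : Matrix (Fin d) (Fin d) ℝ} (hR : IsPolar X R) :
    (Rᵀ * X)ᵀ = Rᵀ * X := by
  set M := Rᵀ * X with hM
  have key : ∀ i j : Fin d, i ≠ j → M i j = M j i := by
    intro i j hij
    have tr_ineq : ∀ c s : ℝ, c ^ 2 + s ^ 2 = 1 →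
        (c - 1) * (M i i + M j j) - s * (M i j - M j i) ≤ 0 := by
      intro c s hcs
      have hG := givens_isOrth hij hcs
      have := hR.trace_le (hR.1.mul hG)
      rw [Matrix.transpose_mul, Matrix.mul_assoc, ← hM] at this
      rw [show (givens i j c s)ᵀ * (Rᵀ * X) = (givens i j c s)ᵀ * M by rw [hM]] at this
      rw [trace_givens_mul] at this
      linarith
    set a := M i i + M j j with ha
    set b := M j i - M i j with hb
    have tr_ineq' : ∀ c s : ℝ, c ^ 2 + s ^ 2 = 1 → c * a + s * b ≤ a := by
      intro c s hcs
      have := tr_ineq c s hcs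
      have : (c - 1) * a - s * (-b) ≤ 0 := by rw [hb]; rw [ha] at this ⊢; linarith [this]
      nlinarith [this]
    have hb0 : b = 0 := by
      rcases eq_or_lt_of_le (Real.sqrt_nonneg (a^2 + b^2)) with hr | hr
      · have : a^2 + b^2 = 0 := by
          have := Real.sqrt_eq_zero' (x := a^2+b^2)
          nlinarith [Real.sq_sqrt (show (0:ℝ) ≤ a^2+b^2 by positivity), hr.symm]
        nlinarith
      · set r := Real.sqrt (a^2 + b^2) with hrdef
        have hr2 : r ^ 2 = a^2 + b^2 := Real.sq_sqrt (by positivity)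
        have hcs : (a/r)^2 + (b/r)^2 = 1 := by
          field_simp
          linarith [hr2]
        have := tr_ineq' (a/r) (b/r) hcs
        have hra : r ≤ a := by
          have hexp : (a/r) * a + (b/r) * b = r := by
            field_simp
            nlinarith [hr2]
          linarith [this, hexp.symm ▸ this]
        nlinarith [hr2, hra, hr]
    rw [hb] at hb0
    linarith
  ext i j
  rcases eq_or_ne i j with rfl | hij
  · rfl
  · exact (key j i hij.symm)
lemma col_sq_sum {d : ℕ} {A : Matrix (Fin d) (Fin d) ℝ} (hA : Aᵀ * A = 1) (i : Fin d) :
    ∑ a, A a i ^ 2 = 1 := by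
  have h : (Aᵀ * A) i i = 1 := by rw [hA]; simp [Matrix.one_apply]
  rw [← h, Matrix.mul_apply]
  congr 1
  ext a
  rw [Matrix.transpose_apply, sq]

lemma IsPolar.exists_decomp {d : ℕ} {X R : Matrix (Fin d) (Fin d) ℝ} (hR : IsPolar X R) :
    ∃ (U : Matrix (Fin d) (Fin d) ℝ) (lam : Fin d → ℝ), IsOrth U ∧
      Rᵀ * X = U * Matrix.diagonal lam * Uᵀ ∧ ∀ i, sigmaMin X ≤ lam i := by
  have hsymm : (Rᵀ * X)ᵀ = Rᵀ * X := hR.symm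
  have hM : (Rᵀ * X).IsHermitian := by
    rw [Matrix.IsHermitian, Matrix.conjTranspose_eq_transpose_of_trivial, hsymm]
  set U : Matrix (Fin d) (Fin d) ℝ := (hM.eigenvectorUnitary : Matrix (Fin d) (Fin d) ℝ)
    with hUdef
  set lam := hM.eigenvalues with hlam
  have h1 : star U * U = 1 := (Unitary.mem_iff.mp hM.eigenvectorUnitary.2).1
  have h2 : U * star U = 1 := (Unitary.mem_iff.mp hM.eigenvectorUnitary.2).2
  have h3 : star U = Uᵀ := Matrix.conjTranspose_eq_transpose_of_trivial U
  have hUo : IsOrth U := ⟨by rw [← h3]; exact h1, by rw [← h3]; exact h2⟩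
  have hdec : Rᵀ * X = U * Matrix.diagonal lam * Uᵀ := by
    rw [← h3]; convert hM.spectral_theorem using 1
    rw [Unitary.conjStarAlgAut_apply]
    simp [hUdef, hlam]
  have conj_tr : ∀ A : Matrix (Fin d) (Fin d) ℝ,
      Matrix.trace (U * A * Uᵀ) = Matrix.trace A := by
    intro A
    rw [Matrix.trace_mul_comm, ← Matrix.mul_assoc, hUo.1, Matrix.one_mul]
  have hpos : ∀ i, 0 ≤ lam i := by
    by_contra hcon
    push_neg at hcon
    obtain ⟨i0, hi0⟩ := hcon
    set sg : Fin d → ℝ := fun k => if lam k < 0 then (-1:ℝ) else 1 with hsgdef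
    set Sg : Matrix (Fin d) (Fin d) ℝ := Matrix.diagonal sg with hSg
    have hSgT : Sgᵀ = Sg := Matrix.diagonal_transpose _
    have hsgsq : (fun k => sg k * sg k) = fun _ => (1:ℝ) := by
      funext k
      by_cases hk : lam k < 0 <;> simp [hsgdef, hk]
    have hSg2 : Sg * Sg = 1 := by
      rw [hSg, Matrix.diagonal_mul_diagonal, hsgsq, Matrix.diagonal_one]
    have hSgo : IsOrth Sg := ⟨by rw [hSgT]; exact hSg2, by rw [hSgT]; exact hSg2⟩
    have hGo : IsOrth (U * Sg * Uᵀ) := (hUo.mul hSgo).mul hUo.transpose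
    have htr := hR.trace_le (hR.1.mul hGo)
    have hL : (R * (U * Sg * Uᵀ))ᵀ * X = U * (Sg * Matrix.diagonal lam) * Uᵀ := by
      rw [Matrix.transpose_mul, Matrix.mul_assoc, hdec]
      rw [Matrix.transpose_mul, Matrix.transpose_mul, Matrix.transpose_transpose, hSgT]
      simp only [Matrix.mul_assoc]
      rw [← Matrix.mul_assoc Uᵀ U, hUo.1, Matrix.one_mul]
    have hLtr : Matrix.trace ((R * (U * Sg * Uᵀ))ᵀ * X) = ∑ k, sg k * lam k := by
      rw [hL, conj_tr, Matrix.diagonal_mul_diagonal, Matrix.trace_diagonal]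
    have hRtr : Matrix.trace (Rᵀ * X) = ∑ k, lam k := by
      rw [hdec, conj_tr, Matrix.trace_diagonal]
    rw [hLtr, hRtr] at htr
    have hterm : ∀ k ∈ Finset.univ, (0:ℝ) ≤ sg k * lam k - lam k := by
      intro k _
      by_cases hk : lam k < 0 <;> simp [hsgdef, hk] <;> nlinarith
    have hsum : ∑ k, (sg k * lam k - lam k) ≤ 0 := by
      rw [Finset.sum_sub_distrib]
      linarith
    have hsingle : sg i0 * lam i0 - lam i0 ≤ ∑ k, (sg k * lam k - lam k) :=
      Finset.single_le_sum hterm (Finset.mem_univ i0)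
    have : sg i0 * lam i0 - lam i0 = -2 * lam i0 := by
      simp only [hsgdef]
      rw [if_pos hi0]
      ring
    nlinarith
  refine ⟨U, lam, hUo, hdec, ?_⟩
  intro i
  set u : Fin d → ℝ := fun a => (R * U) a i with hudef
  have hRU : IsOrth (R * U) := hR.1.mul hUo
  have hun : vnorm u = 1 := by
    rw [vnorm]
    rw [show ∑ a, u a ^ 2 = 1 from col_sq_sum hRU.1 i]
    exact Real.sqrt_one
  have h6 : (R * U)ᵀ * X = Matrix.diagonal lam * Uᵀ := by
    rw [Matrix.transpose_mul, Matrix.mul_assoc, hdec, ← Matrix.mul_assoc,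
      ← Matrix.mul_assoc, hUo.1, Matrix.one_mul]
  have hvec : Matrix.vecMul u X = fun b => lam i * U b i := by
    funext b
    have h5 : Matrix.vecMul u X b = ((R * U)ᵀ * X) i b := by
      rw [Matrix.vecMul, Matrix.mul_apply, dotProduct]
      apply Finset.sum_congr rfl
      intro a _
      rw [Matrix.transpose_apply]
    rw [h5, h6, Matrix.diagonal_mul, Matrix.transpose_apply]
  have hvnorm : vnorm (Matrix.vecMul u X) = lam i := by
    rw [hvec, vnorm]
    have hfac : ∑ b, (lam i * U b i) ^ 2 = lam i ^ 2 * ∑ b, U b i ^ 2 := by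
      rw [Finset.mul_sum]
      congr 1
      ext b
      ring
    rw [hfac, col_sq_sum hUo.1 i, mul_one, Real.sqrt_sq (hpos i)]
  exact csInf_le (sigmaMin_bddBelow X) ⟨u, hun, hvnorm.symm⟩
lemma sylvester_bound {d : ℕ} (lam mu : Fin d → ℝ) {U V : Matrix (Fin d) (Fin d) ℝ}
    (hU : IsOrth U) (hV : IsOrth V) {α β : ℝ} (hl : ∀ i, α ≤ lam i) (hm : ∀ i, β ≤ mu i)
    (hab : 0 ≤ α + β) (W : Matrix (Fin d) (Fin d) ℝ) :
    (α + β) * frob W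
      ≤ frob ((U * Matrix.diagonal lam * Uᵀ) * W + W * (V * Matrix.diagonal mu * Vᵀ)) := by
  set W' := Uᵀ * W * V with hW'
  have hfW : frob W' = frob W := by
    rw [hW', frob_mul_orth_right _ hV, frob_orth_mul_left _ hU.transpose]
  set Z := (U * Matrix.diagonal lam * Uᵀ) * W + W * (V * Matrix.diagonal mu * Vᵀ) with hZdef
  have key : Uᵀ * Z * V = Matrix.diagonal lam * W' + W' * Matrix.diagonal mu := by
    rw [hZdef, Matrix.mul_add, Matrix.add_mul, hW']
    congr 1
    · simp only [Matrix.mul_assoc]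
      rw [← Matrix.mul_assoc Uᵀ U, hU.1, Matrix.one_mul]
    · simp only [Matrix.mul_assoc]
      rw [hV.1, Matrix.mul_one]
  have hfZ : frob Z = frob (Matrix.diagonal lam * W' + W' * Matrix.diagonal mu) := by
    rw [← key, frob_mul_orth_right _ hV, frob_orth_mul_left _ hU.transpose]
  have hentry : ∀ i j, (Matrix.diagonal lam * W' + W' * Matrix.diagonal mu) i j
      = (lam i + mu j) * W' i j := by
    intro i j
    rw [Matrix.add_apply, Matrix.diagonal_mul, Matrix.mul_diagonal]
    ring
  have hsum : (α + β) ^ 2 * (∑ i, ∑ j, W' i j ^ 2)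
      ≤ ∑ i, ∑ j, (Matrix.diagonal lam * W' + W' * Matrix.diagonal mu) i j ^ 2 := by
    rw [Finset.mul_sum]
    apply Finset.sum_le_sum
    intro i _
    rw [Finset.mul_sum]
    apply Finset.sum_le_sum
    intro j _
    rw [hentry i j]
    have h1 := hl i
    have h2 := hm j
    have h3 : 0 ≤ lam i + mu j - (α + β) := by linarith
    have h4 : 0 ≤ lam i + mu j + (α + β) := by linarith
    nlinarith [mul_nonneg (mul_nonneg h3 h4) (sq_nonneg (W' i j))]
  have : (α + β) * frob W' ≤ frob (Matrix.diagonal lam * W' + W' * Matrix.diagonal mu) := by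
    rw [frob, frob]
    have h0 : (α + β) * Real.sqrt (∑ i, ∑ j, W' i j ^ 2)
        = Real.sqrt ((α + β) ^ 2 * (∑ i, ∑ j, W' i j ^ 2)) := by
      rw [Real.sqrt_mul (by positivity), Real.sqrt_sq hab]
    rw [h0]
    exact Real.sqrt_le_sqrt hsum
  rw [← hfW, hfZ]
  exact this

lemma polar_diff_bound {d : ℕ} {X Y R R' : Matrix (Fin d) (Fin d) ℝ}
    (hR : IsPolar X R) (hR' : IsPolar Y R') (hs : 0 < sigmaMin X + sigmaMin Y) :
    frob (R - R') ≤ 2 * frob (X - Y) / (sigmaMin X + sigmaMin Y) := by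
  obtain ⟨U, lam, hU, hdX, hlam⟩ := hR.exists_decomp
  obtain ⟨V, mu, hV, hdY, hmu⟩ := hR'.exists_decomp
  set W := Rᵀ * R' - 1 with hWdef
  have hXR : Xᵀ * R = Rᵀ * X := by
    have := hR.symm
    rw [Matrix.transpose_mul, Matrix.transpose_transpose] at this
    exact this
  have hYR : Yᵀ * R' = R'ᵀ * Y := by
    have := hR'.symm
    rw [Matrix.transpose_mul, Matrix.transpose_transpose] at this
    exact this
  have e1 : (Rᵀ * X) * W = Xᵀ * R' - Rᵀ * X := by
    rw [hWdef, Matrix.mul_sub, Matrix.mul_one]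
    congr 1
    rw [← hXR]
    calc Xᵀ * R * (Rᵀ * R') = Xᵀ * (R * Rᵀ) * R' := by simp only [Matrix.mul_assoc]
    _ = Xᵀ * R' := by rw [hR.1.2, Matrix.mul_one]
  have e2 : W * (R'ᵀ * Y) = Rᵀ * Y - Yᵀ * R' := by
    rw [hWdef, Matrix.sub_mul, Matrix.one_mul, hYR]
    congr 1
    calc Rᵀ * R' * (R'ᵀ * Y) = Rᵀ * (R' * R'ᵀ) * Y := by simp only [Matrix.mul_assoc]
    _ = Rᵀ * Y := by rw [hR'.1.2, Matrix.mul_one]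
  have identity : (Rᵀ * X) * W + W * (R'ᵀ * Y) = (X - Y)ᵀ * R' - Rᵀ * (X - Y) := by
    rw [e1, e2, Matrix.transpose_sub, Matrix.sub_mul, Matrix.mul_sub]
    abel
  have hb := sylvester_bound lam mu hU hV hlam hmu (le_of_lt hs) W
  rw [← hdX, ← hdY, identity] at hb
  have hrhs : frob ((X - Y)ᵀ * R' - Rᵀ * (X - Y)) ≤ 2 * frob (X - Y) := by
    calc frob ((X - Y)ᵀ * R' - Rᵀ * (X - Y))
        ≤ frob ((X - Y)ᵀ * R') + frob (Rᵀ * (X - Y)) := frob_sub_le _ _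
    _ = frob (X - Y) + frob (X - Y) := by
        rw [frob_mul_orth_right _ hR'.1, frob_orth_mul_left _ hR.1.transpose, frob_transpose]
    _ = 2 * frob (X - Y) := by ring
  have hfrobW : frob W = frob (R - R') := by
    have h7 : W = Rᵀ * (R' - R) := by
      rw [hWdef, Matrix.mul_sub, hR.1.1]
    rw [h7, frob_orth_mul_left _ hR.1.transpose, show R' - R = -(R - R') by abel, frob_neg]
  rw [le_div_iff₀ hs]
  calc frob (R - R') * (sigmaMin X + sigmaMin Y)
      = (sigmaMin X + sigmaMin Y) * frob W := by rw [hfrobW]; ring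
  _ ≤ frob ((X - Y)ᵀ * R' - Rᵀ * (X - Y)) := hb
  _ ≤ 2 * frob (X - Y) := hrhs
lemma frob_sq_sum (X : Matrix α β ℝ) : frob X ^ 2 = ∑ i, ∑ j, X i j ^ 2 := by
  rw [frob, Real.sq_sqrt]
  positivity

lemma blk_sub {n d k : ℕ} (A B : Matrix (Fin n × Fin d) (Fin k) ℝ) (i : Fin n) :
    blk (A - B) i = blk A i - blk B i := rfl

lemma blk_mul {n d k : ℕ} (Y : Matrix (Fin n × Fin d) (Fin k) ℝ)
    (Q : Matrix (Fin k) (Fin k) ℝ) (i : Fin n) : blk (Y * Q) i = blk Y i * Q := by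
  ext a b
  simp [blk, Matrix.mul_apply]

lemma frob_blocks {n d k : ℕ} (S : Matrix (Fin n × Fin d) (Fin k) ℝ) :
    frob S = Real.sqrt (∑ i, frob (blk S i) ^ 2) := by
  rw [frob]
  congr 1
  rw [Fintype.sum_prod_type]
  apply Finset.sum_congr rfl
  intro i _
  rw [frob_sq_sum]
  rfl

lemma isPolar_mul_orth {d : ℕ} {X R Q : Matrix (Fin d) (Fin d) ℝ} (hR : IsPolar X R)
    (hQ : IsOrth Q) : IsPolar (X * Q) (R * Q) := by
  refine ⟨hR.1.mul hQ, ?_⟩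
  intro Q' hQ'
  have h1 : X * Q - R * Q = (X - R) * Q := by rw [Matrix.sub_mul]
  have h2 : X * Q - Q' = (X - Q' * Qᵀ) * Q := by
    rw [Matrix.sub_mul, Matrix.mul_assoc, hQ.1, Matrix.mul_one]
  rw [h1, h2, frob_mul_orth_right _ hQ, frob_mul_orth_right _ hQ]
  exact hR.2 _ (hQ'.mul hQ.transpose)

lemma dF_bddBelow {n d : ℕ} (X Y : Matrix (Fin n × Fin d) (Fin d) ℝ) :
    BddBelow {r : ℝ | ∃ Q, IsOrth Q ∧ r = frob (X - Y * Q)} := by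
  refine ⟨0, ?_⟩
  rintro r ⟨Q, hQ, rfl⟩
  exact frob_nonneg _

lemma dF_le {n d : ℕ} (X Y : Matrix (Fin n × Fin d) (Fin d) ℝ)
    {Q : Matrix (Fin d) (Fin d) ℝ} (hQ : IsOrth Q) : dF X Y ≤ frob (X - Y * Q) :=
  csInf_le (dF_bddBelow X Y) ⟨Q, hQ, rfl⟩


end AuxLemmas

/-- Lemma 5.4: Lipschitz continuity of the blockwise polar factor map P_n
with respect to d_F. -/
theorem polarBlocks_lipschitz (n d : ℕ) (hn : 1 ≤ n)
    (X Y : Matrix (Fin n × Fin d) (Fin d) ℝ)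
    (h : 0 < ⨅ i : Fin n, (sigmaMin (blk X i) + sigmaMin (blk Y i)))
    (PX PY : Matrix (Fin n × Fin d) (Fin d) ℝ)
    (hPX : IsPolarBlocks X PX) (hPY : IsPolarBlocks Y PY) :
    dF PX PY ≤ 2 * dF X Y / ⨅ i : Fin n, (sigmaMin (blk X i) + sigmaMin (blk Y i)) := by
  have hne : Nonempty (Fin n) := ⟨⟨0, hn⟩⟩
  set σ := ⨅ i : Fin n, (sigmaMin (blk X i) + sigmaMin (blk Y i)) with hσdef
  have hσpos : 0 < σ := h
  have hle : ∀ i, σ ≤ sigmaMin (blk X i) + sigmaMin (blk Y i) := fun i =>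
    ciInf_le (Set.Finite.bddBelow (Set.finite_range _)) i
  have main : ∀ Q : Matrix (Fin d) (Fin d) ℝ, IsOrth Q →
      dF PX PY ≤ 2 / σ * frob (X - Y * Q) := by
    intro Q hQ
    have per : ∀ i, frob (blk PX i - blk PY i * Q)
        ≤ 2 / σ * frob (blk X i - blk Y i * Q) := by
      intro i
      have h1 : IsPolar (blk X i) (blk PX i) := hPX i
      have h2 : IsPolar (blk Y i * Q) (blk PY i * Q) := isPolar_mul_orth (hPY i) hQ
      have hsQ : sigmaMin (blk Y i * Q) = sigmaMin (blk Y i) := sigmaMin_mul_orth _ hQ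
      have hsi : 0 < sigmaMin (blk X i) + sigmaMin (blk Y i * Q) := by
        rw [hsQ]
        exact lt_of_lt_of_le hσpos (hle i)
      have hli := polar_diff_bound h1 h2 hsi
      have hσle : σ ≤ sigmaMin (blk X i) + sigmaMin (blk Y i * Q) := by
        rw [hsQ]; exact hle i
      calc frob (blk PX i - blk PY i * Q)
          ≤ 2 * frob (blk X i - blk Y i * Q)
              / (sigmaMin (blk X i) + sigmaMin (blk Y i * Q)) := hli
      _ ≤ 2 / σ * frob (blk X i - blk Y i * Q) := by
          rw [div_mul_eq_mul_div, mul_comm (2:ℝ), mul_div_assoc, mul_div_assoc]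
          apply mul_le_mul_of_nonneg_left _ (frob_nonneg _)
          exact div_le_div_of_nonneg_left (by norm_num) hσpos hσle
    have hsq : frob (PX - PY * Q) ≤ 2 / σ * frob (X - Y * Q) := by
      rw [frob_blocks (PX - PY * Q), frob_blocks (X - Y * Q)]
      have hsum : ∑ i, frob (blk (PX - PY * Q) i) ^ 2
          ≤ (2 / σ) ^ 2 * ∑ i, frob (blk (X - Y * Q) i) ^ 2 := by
        rw [Finset.mul_sum]
        apply Finset.sum_le_sum
        intro i _
        rw [blk_sub, blk_mul, blk_sub, blk_mul]
        have := per i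
        have hnn : (0:ℝ) ≤ frob (blk PX i - blk PY i * Q) := frob_nonneg _
        nlinarith [frob_nonneg (blk X i - blk Y i * Q)]
      calc Real.sqrt (∑ i, frob (blk (PX - PY * Q) i) ^ 2)
          ≤ Real.sqrt ((2 / σ) ^ 2 * ∑ i, frob (blk (X - Y * Q) i) ^ 2) :=
            Real.sqrt_le_sqrt hsum
      _ = 2 / σ * Real.sqrt (∑ i, frob (blk (X - Y * Q) i) ^ 2) := by
          rw [Real.sqrt_mul (by positivity), Real.sqrt_sq (by positivity)]
    exact le_trans (dF_le PX PY hQ) hsq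
  have hD : ∀ ε > (0:ℝ), dF PX PY ≤ 2 / σ * (dF X Y + ε) := by
    intro ε hε
    have hneS : {r : ℝ | ∃ Q, IsOrth Q ∧ r = frob (X - Y * Q)}.Nonempty :=
      ⟨frob (X - Y * 1), 1, isOrth_one, rfl⟩
    have hlt : dF X Y < dF X Y + ε := lt_add_of_pos_right _ hε
    obtain ⟨r, hrmem, hrlt⟩ := (csInf_lt_iff (dF_bddBelow X Y) hneS).mp hlt
    obtain ⟨Q, hQ, rfl⟩ := hrmem
    calc dF PX PY ≤ 2 / σ * frob (X - Y * Q) := main Q hQ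
    _ ≤ 2 / σ * (dF X Y + ε) := by
        apply mul_le_mul_of_nonneg_left (le_of_lt hrlt) (by positivity)
  have hfinal : dF PX PY ≤ 2 / σ * dF X Y := by
    apply le_of_forall_pos_le_add
    intro δ hδ
    have hε : (0:ℝ) < δ * σ / 2 := by positivity
    calc dF PX PY ≤ 2 / σ * (dF X Y + δ * σ / 2) := hD _ hε
    _ = 2 / σ * dF X Y + δ := by
        field_simp
  calc dF PX PY ≤ 2 / σ * dF X Y := hfinal
  _ = 2 * dF X Y / σ := by ring


end GOPP
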